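/- Let WF iterates be defined by f_{τ+1} = f_τ − μ̄·G(f_τ) starting from an arbitrary f_0 ∈ ℂ^N, where μ̄ = 1/λmax(A^H A) and G is the generalized gradient of the amplitude loss L, and let f̂ be a global minimizer of L. Then for every T ≥ 0, min_{τ ∈ {0,1,…,T}} ‖G(f_τ)‖₂² ≤ (L(f_0) − L(f̂)) / (μ̄·(T+1)). -/

import Mathlib

open scoped BigOperators
open Matrix

noncomputable section

namespace AWF

/-- Complex signum: `z/|z|` for `z ≠ 0`, and `0` at `0`. -/
def csgn (z : ℂ) : ℂ := if z = 0 then 0 else z / ((‖z‖ : ℝ) : ℂ)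

variable {M N : ℕ}

/-- Amplitude loss `L(f) = ∑ (b_m − |(Af)_m|)²`. -/
def ampLoss (A : Matrix (Fin M) (Fin N) ℂ) (b : Fin M → ℝ) (f : Fin N → ℂ) : ℝ :=
  ∑ m, (b m - ‖A.mulVec f m‖) ^ 2

/-- Generalized (Wirtinger) gradient `G(f) = Aᴴ(Af − b ⊙ sgn(Af))`. -/
def wGrad (A : Matrix (Fin M) (Fin N) ℂ) (b : Fin M → ℝ) (f : Fin N → ℂ) : Fin N → ℂ :=
  Aᴴ.mulVec (fun m => A.mulVec f m - (b m : ℂ) * csgn (A.mulVec f m))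

/-- Euclidean (ℓ₂) norm of a complex vector. -/
def norm2 {n : ℕ} (v : Fin n → ℂ) : ℝ := Real.sqrt (∑ i, ‖v i‖ ^ 2)

/-- The largest eigenvalue of the positive semidefinite Hermitian matrix `Aᴴ A`. -/
def lamMax (A : Matrix (Fin M) (Fin N) ℂ) : ℝ :=
  ⨆ i, (Matrix.isHermitian_conjTranspose_mul_self A).eigenvalues i

end AWF

namespace AWF

variable {M N : ℕ}

/-! ### Auxiliary lemmas -/

lemma adjoint_dot (A : Matrix (Fin M) (Fin N) ℂ) (x : Fin M → ℂ) (d : Fin N → ℂ) :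
    star x ⬝ᵥ (A *ᵥ d) = star (Aᴴ *ᵥ x) ⬝ᵥ d := by
  rw [Matrix.dotProduct_mulVec, Matrix.star_mulVec, conjTranspose_conjTranspose]

lemma re_dot_self {n : ℕ} (v : Fin n → ℂ) : (star v ⬝ᵥ v).re = ∑ i, ‖v i‖ ^ 2 := by
  rw [dotProduct, Complex.re_sum]
  refine Finset.sum_congr rfl fun i _ => ?_
  simp [Pi.star_apply, Complex.sq_norm, Complex.normSq_apply,
    Complex.mul_re]

lemma spec_bound (A : Matrix (Fin M) (Fin N) ℂ) (v : Fin N → ℂ) :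
    ∑ m, ‖(A *ᵥ v) m‖ ^ 2 ≤ lamMax A * ∑ i, ‖v i‖ ^ 2 := by
  set hH := Matrix.isHermitian_conjTranspose_mul_self A with hHdef
  set U : Matrix (Fin N) (Fin N) ℂ := (hH.eigenvectorUnitary : Matrix (Fin N) (Fin N) ℂ) with hU
  set w : Fin N → ℂ := star U *ᵥ v with hw
  have hUU : U * star U = 1 := Matrix.mem_unitaryGroup_iff.mp hH.eigenvectorUnitary.2
  -- norm preservation under the unitary change of basis
  have hwv : ∑ i, ‖w i‖ ^ 2 = ∑ i, ‖v i‖ ^ 2 := by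
    rw [← re_dot_self, ← re_dot_self, hw]
    have : star (star U *ᵥ v) ⬝ᵥ (star U *ᵥ v) = star ((star U)ᴴ *ᵥ (star U *ᵥ v)) ⬝ᵥ v :=
      adjoint_dot _ _ _
    rw [this, Matrix.mulVec_mulVec]
    rw [Matrix.star_eq_conjTranspose, conjTranspose_conjTranspose, ← Matrix.star_eq_conjTranspose,
      hUU, Matrix.one_mulVec]
  -- main computation via the spectral theorem
  have key : ∑ m, ‖(A *ᵥ v) m‖ ^ 2 = ∑ i, hH.eigenvalues i * ‖w i‖ ^ 2 := by
    rw [← re_dot_self]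
    have h1 : star (A *ᵥ v) ⬝ᵥ (A *ᵥ v) = star ((Aᴴ * A) *ᵥ v) ⬝ᵥ v := by
      rw [adjoint_dot, Matrix.mulVec_mulVec]
    have h2 : (Aᴴ * A) *ᵥ v = U *ᵥ (Matrix.diagonal (RCLike.ofReal ∘ hH.eigenvalues) *ᵥ w) := by
      conv_lhs => rw [hH.spectral_theorem]
      rw [Unitary.conjStarAlgAut_apply]
      rw [← Matrix.mulVec_mulVec, ← Matrix.mulVec_mulVec]
    have h3 : star (U *ᵥ (Matrix.diagonal (RCLike.ofReal ∘ hH.eigenvalues) *ᵥ w)) ⬝ᵥ v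
        = star (Matrix.diagonal (RCLike.ofReal ∘ hH.eigenvalues) *ᵥ w) ⬝ᵥ w := by
      rw [Matrix.star_mulVec, ← Matrix.dotProduct_mulVec, hw, Matrix.star_eq_conjTranspose]
    rw [h1, h2, h3, dotProduct, Complex.re_sum]
    refine Finset.sum_congr rfl fun i _ => ?_
    simp only [Pi.star_apply, Matrix.mulVec_diagonal, Function.comp_apply]
    simp [Complex.sq_norm, Complex.normSq_apply, Complex.mul_re,
      RCLike.ofReal]
    ring
  rw [key, hwv.symm, Finset.mul_sum]
  refine Finset.sum_le_sum fun i _ => ?_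
  have hle : hH.eigenvalues i ≤ lamMax A :=
    le_ciSup (Set.Finite.bddAbove (Set.finite_range _)) i
  have : (0:ℝ) ≤ ‖w i‖ ^ 2 := by positivity
  nlinarith

lemma key_pt (bm : ℝ) (hbm : 0 ≤ bm) (z z' : ℂ) :
    (bm - ‖z'‖) ^ 2 - ‖z' - (bm : ℂ) * csgn z‖ ^ 2
      ≤ (bm - ‖z‖) ^ 2 - ‖z - (bm : ℂ) * csgn z‖ ^ 2 := by
  by_cases hz : z = 0
  · subst hz
    have h2 : (0:ℝ) ≤ ‖z'‖ := norm_nonneg z'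
    simp only [csgn, if_pos rfl, if_true, eq_self_iff_true, mul_zero, sub_zero, map_zero,
      norm_zero]
    nlinarith
  · have habs : (0:ℝ) < ‖z‖ := norm_pos_iff.mpr hz
    have hcs : csgn z = z / ((‖z‖ : ℝ) : ℂ) := if_neg hz
    have hcabs : ‖(bm : ℂ) * csgn z‖ = bm := by
      rw [hcs, norm_mul, norm_div, Complex.norm_real, Complex.norm_real,
        norm_norm, div_self habs.ne',
        mul_one, Real.norm_eq_abs, abs_of_nonneg hbm]
    -- RHS is zero
    have hzc : z - (bm : ℂ) * csgn z = (((‖z‖ - bm) / ‖z‖ : ℝ) : ℂ) * z := by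
      rw [hcs]
      have : ((‖z‖ : ℝ) : ℂ) ≠ 0 := by
        simpa using habs.ne'
      field_simp
      push_cast
      field_simp
    have hR : ‖z - (bm : ℂ) * csgn z‖ ^ 2 = (bm - ‖z‖) ^ 2 := by
      rw [hzc, norm_mul, Complex.norm_real, Real.norm_eq_abs,
        mul_pow, sq_abs, div_pow]
      field_simp
      ring
    -- LHS nonpositive
    have hL : (bm - ‖z'‖) ^ 2 ≤ ‖z' - (bm : ℂ) * csgn z‖ ^ 2 := by
      have h := abs_norm_sub_norm_le z' ((bm : ℂ) * csgn z)
      rw [hcabs] at h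
      have := abs_nonneg (‖z'‖ - bm)
      nlinarith [sq_abs (‖z'‖ - bm)]
    nlinarith [hR, hL]

lemma norm_add_sq' (u w : ℂ) :
    ‖u + w‖ ^ 2 = ‖u‖ ^ 2 + 2 * ((starRingEnd ℂ) u * w).re + ‖w‖ ^ 2 := by
  simp [Complex.sq_norm, Complex.normSq_apply, Complex.mul_re,
    Complex.add_re, Complex.add_im]
  ring

/-- The key descent lemma: one WF step with step size `1/λmax` decreases the loss by at
least `μ̄ ‖G(f)‖²`. -/
lemma descent (A : Matrix (Fin M) (Fin N) ℂ) (b : Fin M → ℝ) (hb : ∀ m, 0 ≤ b m)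
    (hpos : 0 < lamMax A) (f : Fin N → ℂ) :
    ampLoss A b (f - (1 / lamMax A) • wGrad A b f)
      ≤ ampLoss A b f - (1 / lamMax A) * ∑ i, ‖wGrad A b f i‖ ^ 2 := by
  set μ : ℝ := 1 / lamMax A with hμ
  have hμpos : 0 < μ := by positivity
  have hμlam : μ * lamMax A = 1 := by
    rw [hμ, one_div_mul_cancel hpos.ne']
  set G : Fin N → ℂ := wGrad A b f with hGdef
  set S : ℝ := ∑ i, ‖G i‖ ^ 2 with hS
  set c : Fin M → ℂ := fun m => (b m : ℂ) * csgn ((A *ᵥ f) m) with hc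
  set r : Fin M → ℂ := fun m => (A *ᵥ f) m - c m with hr
  have hGr : G = Aᴴ *ᵥ r := rfl
  set f' : Fin N → ℂ := f - μ • G with hf'
  set e : Fin M → ℂ := fun m => -(μ : ℂ) * (A *ᵥ G) m with he
  have hAf' : ∀ m, (A *ᵥ f') m - c m = r m + e m := by
    intro m
    rw [hf', Matrix.mulVec_sub, Matrix.mulVec_smul]
    simp only [Pi.sub_apply, Pi.smul_apply, hr, he, Complex.real_smul]
    ring
  -- the dot product term
  have hdot : (star r ⬝ᵥ e).re = -(μ * S) := by
    have h1 : e = (-(μ : ℂ)) • (A *ᵥ G) := by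
      funext m; simp [he, smul_eq_mul]
    rw [h1, dotProduct_smul, adjoint_dot, ← hGr, smul_eq_mul]
    have : (-(μ : ℂ)) = ((-μ : ℝ) : ℂ) := by push_cast; ring
    rw [this, Complex.re_ofReal_mul, re_dot_self, ← hS]
    ring
  -- sum of ‖e‖²
  have hE : ∑ m, ‖e m‖ ^ 2 ≤ μ * S := by
    have h1 : ∀ m, ‖e m‖ ^ 2 = μ ^ 2 * ‖(A *ᵥ G) m‖ ^ 2 := by
      intro m
      rw [he, norm_mul, norm_neg, Complex.norm_real, Real.norm_eq_abs,
        abs_of_pos hμpos, mul_pow]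
    calc ∑ m, ‖e m‖ ^ 2 = μ ^ 2 * ∑ m, ‖(A *ᵥ G) m‖ ^ 2 := by
          rw [Finset.mul_sum]; exact Finset.sum_congr rfl fun m _ => h1 m
      _ ≤ μ ^ 2 * (lamMax A * S) := by
          have := spec_bound A G
          nlinarith [sq_nonneg μ]
      _ = μ * S := by
          have : μ ^ 2 * (lamMax A * S) = (μ * lamMax A) * (μ * S) := by ring
          rw [this, hμlam, one_mul]
  -- quadratic expansion
  have hQ : ∑ m, ‖(A *ᵥ f') m - c m‖ ^ 2
      = ∑ m, ‖r m‖ ^ 2 + 2 * (star r ⬝ᵥ e).re + ∑ m, ‖e m‖ ^ 2 := by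
    have h1 : ∀ m, ‖(A *ᵥ f') m - c m‖ ^ 2
        = ‖r m‖ ^ 2 + 2 * ((starRingEnd ℂ) (r m) * e m).re + ‖e m‖ ^ 2 := by
      intro m; rw [hAf' m, norm_add_sq']
    rw [Finset.sum_congr rfl fun m _ => h1 m]
    rw [Finset.sum_add_distrib, Finset.sum_add_distrib, dotProduct, Complex.re_sum,
      Finset.mul_sum]
    simp [Pi.star_apply]
  -- split the losses
  have hsplit : ∀ g : Fin N → ℂ,
      ampLoss A b g = (∑ m, ((b m - ‖(A *ᵥ g) m‖) ^ 2 - ‖(A *ᵥ g) m - c m‖ ^ 2))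
        + ∑ m, ‖(A *ᵥ g) m - c m‖ ^ 2 := by
    intro g
    rw [← Finset.sum_add_distrib, ampLoss]
    exact Finset.sum_congr rfl fun m _ => by ring
  have hP : ∑ m, ((b m - ‖(A *ᵥ f') m‖) ^ 2 - ‖(A *ᵥ f') m - c m‖ ^ 2)
      ≤ ∑ m, ((b m - ‖(A *ᵥ f) m‖) ^ 2 - ‖(A *ᵥ f) m - c m‖ ^ 2) := by
    refine Finset.sum_le_sum fun m _ => ?_
    exact key_pt (b m) (hb m) ((A *ᵥ f) m) ((A *ᵥ f') m)
  have hrQ : ∑ m, ‖(A *ᵥ f) m - c m‖ ^ 2 = ∑ m, ‖r m‖ ^ 2 := rfl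
  have h1 := hsplit f'
  have h2 := hsplit f
  rw [hQ, hdot] at h1
  rw [hrQ] at h2
  rw [h1, h2]
  linarith

/-- For WF iterates with step size `μ̄ = 1/λmax(AᴴA)` and a global
minimizer `f̂` of `L`, `min_{0 ≤ τ ≤ T} ‖G(f_τ)‖² ≤ (L(f_0) − L(f̂)) / (μ̄ (T+1))`. -/
theorem wf_min_grad_bound
    {M N : ℕ} (A : Matrix (Fin M) (Fin N) ℂ) (b : Fin M → ℝ) (hb : ∀ m, 0 ≤ b m)
    (hpos : 0 < lamMax A)
    (fhat : Fin N → ℂ) (hmin : ∀ g, ampLoss A b fhat ≤ ampLoss A b g)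
    (f : ℕ → Fin N → ℂ)
    (hiter : ∀ τ, f (τ + 1) = f τ - (1 / lamMax A) • wGrad A b (f τ))
    (T : ℕ) :
    (Finset.range (T + 1)).inf' Finset.nonempty_range_add_one
        (fun τ => norm2 (wGrad A b (f τ)) ^ 2)
      ≤ (ampLoss A b (f 0) - ampLoss A b fhat) / ((1 / lamMax A) * (T + 1)) := by
  have hμpos : 0 < 1 / lamMax A := by positivity
  set μ : ℝ := 1 / lamMax A with hμ
  set S : ℕ → ℝ := fun τ => ∑ i, ‖wGrad A b (f τ) i‖ ^ 2 with hSdef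
  set L : ℕ → ℝ := fun τ => ampLoss A b (f τ) with hLdef
  set I : ℝ := (Finset.range (T + 1)).inf' Finset.nonempty_range_add_one
      (fun τ => norm2 (wGrad A b (f τ)) ^ 2) with hI
  have hS0 : ∀ τ, norm2 (wGrad A b (f τ)) ^ 2 = S τ := by
    intro τ
    rw [norm2, Real.sq_sqrt (by positivity)]
  have hstep : ∀ τ, μ * S τ ≤ L τ - L (τ + 1) := by
    intro τ
    have hd := descent A b hb hpos (f τ)
    rw [← hμ, ← hiter τ] at hd
    simp only [hLdef, hSdef]
    linarith
  have hinf : ∀ τ ∈ Finset.range (T + 1), I ≤ S τ := by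
    intro τ hτ
    rw [← hS0 τ]
    exact Finset.inf'_le _ hτ
  have hcard : ((T : ℝ) + 1) * I ≤ ∑ τ ∈ Finset.range (T + 1), S τ := by
    have h := Finset.card_nsmul_le_sum (Finset.range (T + 1)) S I hinf
    rw [Finset.card_range, nsmul_eq_mul] at h
    push_cast at h
    linarith
  have htel : ∑ τ ∈ Finset.range (T + 1), (L τ - L (τ + 1)) = L 0 - L (T + 1) :=
    Finset.sum_range_sub' L (T + 1)
  have hsum : μ * ∑ τ ∈ Finset.range (T + 1), S τ ≤ L 0 - ampLoss A b fhat := by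
    calc μ * ∑ τ ∈ Finset.range (T + 1), S τ
        = ∑ τ ∈ Finset.range (T + 1), μ * S τ := Finset.mul_sum _ _ _
      _ ≤ ∑ τ ∈ Finset.range (T + 1), (L τ - L (τ + 1)) :=
          Finset.sum_le_sum fun τ _ => hstep τ
      _ = L 0 - L (T + 1) := htel
      _ ≤ L 0 - ampLoss A b fhat := by
          have := hmin (f (T + 1))
          simp only [hLdef]
          linarith
  have hden : 0 < μ * ((T : ℝ) + 1) := by positivity
  rw [le_div_iff₀ hden]
  have h1 : μ * (((T : ℝ) + 1) * I) ≤ μ * ∑ τ ∈ Finset.range (T + 1), S τ :=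
    mul_le_mul_of_nonneg_left hcard hμpos.le
  have h2 : I * (μ * ((T : ℝ) + 1)) = μ * (((T : ℝ) + 1) * I) := by ring
  rw [h2]
  linarith

end AWF
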